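/- Let V be a rank one valuation domain with quotient field K, F a finite field extension of K, W a valuation domain of F lying over V, and (α, γ) ∈ F × Γ_w. If S ⊆ V satisfies Int(S, V) ⊆ W_{α,γ} ∩ K(X), then Int(S, W) ⊆ W_{α,γ}. -/

import Mathlib

open Polynomial

noncomputable def wAlphaGamma {F : Type*} [Field F] (w : AddValuation F (WithTop ℝ))
    (α : F) (γ : ℝ) (g : Polynomial F) : WithTop ℝ :=
  (g.comp (X + C α)).support.inf
    (fun i => w ((g.comp (X + C α)).coeff i) + (((i : ℝ) * γ : ℝ) : WithTop ℝ))

lemma wt_coe_le_add_iff (r s : ℝ) (y : WithTop ℝ) :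
    ((r : WithTop ℝ) ≤ (s : WithTop ℝ) + y) ↔ (((r - s : ℝ) : WithTop ℝ) ≤ y) := by
  induction y using WithTop.recTopCoe with
  | top => simp
  | coe a =>
      rw [← WithTop.coe_add, WithTop.coe_le_coe, WithTop.coe_le_coe]
      constructor <;> intro <;> linarith

lemma wt_le_add_coe_iff (r s : ℝ) (y : WithTop ℝ) :
    ((r : WithTop ℝ) ≤ y + (s : WithTop ℝ)) ↔ (((r - s : ℝ) : WithTop ℝ) ≤ y) := by
  rw [add_comm]; exact wt_coe_le_add_iff r s y

lemma wt_add_le_add {r s : ℝ} {y z : WithTop ℝ} (h1 : (r : WithTop ℝ) ≤ y)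
    (h2 : (s : WithTop ℝ) ≤ z) : (((r + s : ℝ)) : WithTop ℝ) ≤ y + z := by
  rw [WithTop.coe_add]; exact add_le_add h1 h2

lemma wt_eq_of_add_coe {y : WithTop ℝ} {t x : ℝ} (h : y + (t : WithTop ℝ) = (x : WithTop ℝ)) :
    y = ((x - t : ℝ) : WithTop ℝ) := by
  induction y using WithTop.recTopCoe with
  | top => simp at h
  | coe a =>
      rw [← WithTop.coe_add, WithTop.coe_inj] at h
      rw [WithTop.coe_inj]; linarith

section Val
variable {F : Type*} [Field F] (w : AddValuation F (WithTop ℝ))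

lemma w_ne_top {x : F} (hx : x ≠ 0) : w x ≠ ⊤ := by
  intro htop
  have h1 : w x + w x⁻¹ = 0 := by rw [← w.map_mul, mul_inv_cancel₀ hx, w.map_one]
  rw [htop, top_add] at h1
  simp at h1

lemma w_sum_ge {ι : Type*} {s : Finset ι} {f : ι → F} {c : WithTop ℝ}
    (h : ∀ i ∈ s, c ≤ w (f i)) : c ≤ w (∑ i ∈ s, f i) := by
  induction s using Finset.cons_induction with
  | empty => rw [Finset.sum_empty, w.map_zero]; exact le_top
  | cons a s ha ih =>
      rw [Finset.sum_cons]
      refine le_trans (le_min (h a (Finset.mem_cons_self a s))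
        (ih fun i hi => h i (Finset.mem_cons.2 (Or.inr hi)))) (w.map_add _ _)

lemma w_prod_nonneg {ι : Type*} {s : Finset ι} {f : ι → F}
    (h : ∀ i ∈ s, 0 ≤ w (f i)) : 0 ≤ w (∏ i ∈ s, f i) := by
  induction s using Finset.cons_induction with
  | empty => rw [Finset.prod_empty, w.map_one]
  | cons a s ha ih =>
      rw [Finset.prod_cons, w.map_mul]
      exact add_nonneg (h a (Finset.mem_cons_self a s))
        (ih fun i hi => h i (Finset.mem_cons.2 (Or.inr hi)))

lemma w_sub_ge {x y : F} : min (w x) (w y) ≤ w (x - y) := by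
  have := w.map_add x (-y)
  rwa [w.map_neg, ← sub_eq_add_neg] at this

variable (α : F) (γ : ℝ)

lemma le_wAG {c : WithTop ℝ} {g : Polynomial F}
    (h : ∀ i : ℕ, c ≤ w ((g.comp (X + C α)).coeff i) + (((i : ℝ) * γ : ℝ) : WithTop ℝ)) :
    c ≤ wAlphaGamma w α γ g := Finset.le_inf fun i _ => h i

lemma wAG_coeff_le {c : WithTop ℝ} {g : Polynomial F} (h : c ≤ wAlphaGamma w α γ g) (i : ℕ) :
    c ≤ w ((g.comp (X + C α)).coeff i) + (((i : ℝ) * γ : ℝ) : WithTop ℝ) := by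
  by_cases hi : i ∈ (g.comp (X + C α)).support
  · exact le_trans h (Finset.inf_le hi)
  · rw [Polynomial.notMem_support_iff.mp hi, w.map_zero, top_add]; exact le_top

lemma wAG_le_coeff {g : Polynomial F} {i : ℕ} (hi : i ∈ (g.comp (X + C α)).support) :
    wAlphaGamma w α γ g ≤ w ((g.comp (X + C α)).coeff i) + (((i : ℝ) * γ : ℝ) : WithTop ℝ) :=
  Finset.inf_le hi

end Val

section NT
variable {K F : Type*} [Field K] [Field F] [Algebra K F] [FiniteDimensional K F]
variable (w : AddValuation F (WithTop ℝ))

lemma w_sum_ge' {ι : Type*} {s : Finset ι} {f : ι → F} {c : WithTop ℝ}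
    (h : ∀ i ∈ s, c ≤ w (f i)) : c ≤ w (∑ i ∈ s, f i) := by
  induction s using Finset.cons_induction with
  | empty => rw [Finset.sum_empty, w.map_zero]; exact le_top
  | cons a s ha ih =>
      rw [Finset.sum_cons]
      refine le_trans (le_min (h a (Finset.mem_cons_self a s))
        (ih fun i hi => h i (Finset.mem_cons.2 (Or.inr hi)))) (w.map_add _ _)

lemma exists_neg_val (hrank : ∃ π : F, 0 < w π ∧ w π ≠ ⊤) :
    ∃ a : K, a ≠ 0 ∧ w (algebraMap K F a) < 0 := by
  obtain ⟨π, hπpos, hπtop⟩ := hrank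
  by_contra hcon
  push_neg at hcon
  have hval : ∀ a : K, a ≠ 0 → w (algebraMap K F a) = 0 := by
    intro a ha
    have h1 := hcon a ha
    have h2 := hcon a⁻¹ (inv_ne_zero ha)
    have h3 : w (algebraMap K F a) + w (algebraMap K F a⁻¹) = 0 := by
      rw [← w.map_mul, ← map_mul, mul_inv_cancel₀ ha, map_one, w.map_one]
    exact le_antisymm (h3 ▸ le_add_of_nonneg_right h2) h1
  have hπ0 : π ≠ 0 := by
    intro h0; rw [h0, w.map_zero] at hπtop; exact hπtop rfl
  have hint : IsIntegral K π := IsIntegral.of_finite K π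
  have hq0 : (minpoly K π).coeff 0 ≠ 0 := minpoly.coeff_zero_ne_zero hint hπ0
  have haev : Polynomial.aeval π (minpoly K π) = 0 := minpoly.aeval K π
  have hsplit : Polynomial.aeval π (minpoly K π)
      = (Polynomial.aeval π (minpoly K π).divX) * π + algebraMap K F ((minpoly K π).coeff 0) := by
    conv_lhs => rw [← (minpoly K π).divX_mul_X_add]
    simp [map_add, map_mul]
  have hc0 : algebraMap K F ((minpoly K π).coeff 0)
      = -((Polynomial.aeval π (minpoly K π).divX) * π) := by
    rw [hsplit] at haev
    exact eq_neg_of_add_eq_zero_right haev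
  -- value of divX evaluated is nonneg
  have hd : 0 ≤ w (Polynomial.aeval π (minpoly K π).divX) := by
    rw [Polynomial.aeval_eq_sum_range]
    apply w_sum_ge' w
    intro i _
    by_cases hci : (minpoly K π).divX.coeff i = 0
    · rw [hci, zero_smul, w.map_zero]; exact le_top
    · rw [Algebra.smul_def, w.map_mul, hval _ hci, zero_add, w.map_pow]
      exact nsmul_nonneg hπpos.le i
  have h0 : (0 : WithTop ℝ) = w (algebraMap K F ((minpoly K π).coeff 0)) := (hval _ hq0).symm
  rw [hc0, w.map_neg, w.map_mul] at h0
  have : (0 : WithTop ℝ) < w (Polynomial.aeval π (minpoly K π).divX) + w π :=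
    lt_of_lt_of_le hπpos (le_add_of_nonneg_left hd)
  rw [← h0] at this
  exact lt_irrefl _ this

lemma exists_lt_val (hrank : ∃ π : F, 0 < w π ∧ w π ≠ ⊤) (r : ℝ) :
    ∃ a : K, a ≠ 0 ∧ w (algebraMap K F a) < (r : WithTop ℝ) := by
  obtain ⟨a0, ha0, hv⟩ := exists_neg_val (K := K) w hrank
  obtain ⟨x, hx⟩ := WithTop.ne_top_iff_exists.mp (ne_top_of_lt hv)
  have hx0 : x < 0 := by
    rw [← hx, ← WithTop.coe_zero, WithTop.coe_lt_coe] at hv; exact hv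
  obtain ⟨m, hm⟩ := exists_nat_gt (r / x)
  refine ⟨a0 ^ m, pow_ne_zero m ha0, ?_⟩
  rw [map_pow, w.map_pow, ← hx]
  have : ((m : ℝ) * x : ℝ) < r := (div_lt_iff_of_neg hx0).mp hm
  calc m • ((x : WithTop ℝ)) = (((m : ℝ) * x : ℝ) : WithTop ℝ) := by
        rw [← WithTop.coe_nsmul]; norm_cast; simp [nsmul_eq_mul]
    _ < (r : WithTop ℝ) := WithTop.coe_lt_coe.mpr this

end NT

section Main
variable {K F : Type*} [Field K] [Field F] [Algebra K F]
variable (w : AddValuation F (WithTop ℝ)) (α : F) (γ : ℝ) (S : Set K)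

lemma vanish_absurd
    (h : ∀ f : Polynomial K, (∀ s ∈ S, 0 ≤ w (algebraMap K F (f.eval s))) →
      0 ≤ wAlphaGamma w α γ (f.map (algebraMap K F)))
    (hneg : ∀ r : ℝ, ∃ a : K, a ≠ 0 ∧ w (algebraMap K F a) < (r : WithTop ℝ))
    (p : Polynomial K) (hm : p.Monic) (hvan : ∀ s ∈ S, p.eval s = 0) : False := by
  set N := ((p.map (algebraMap K F)).comp (X + C α)).natDegree with hN
  obtain ⟨a, ha0, hav⟩ := hneg (-((N : ℝ) * γ))
  have happ := h (C a * p) (fun s hs => by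
    rw [eval_mul, hvan s hs, mul_zero, map_zero, w.map_zero]; exact le_top)
  have hmono : ((p.map (algebraMap K F)).comp (X + C α)).Monic :=
    (hm.map (algebraMap K F)).comp_X_add_C α
  have hcomp : ((C a * p).map (algebraMap K F)).comp (X + C α)
      = C (algebraMap K F a) * ((p.map (algebraMap K F)).comp (X + C α)) := by
    rw [Polynomial.map_mul, map_C, Polynomial.mul_comp, C_comp]
  have hcoeffN : (((C a * p).map (algebraMap K F)).comp (X + C α)).coeff N
      = algebraMap K F a := by
    have h1 : ((p.map (algebraMap K F)).comp (X + C α)).coeff N = 1 := hmono.coeff_natDegree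
    rw [hcomp, coeff_C_mul, h1, mul_one]
  have hmem : N ∈ (((C a * p).map (algebraMap K F)).comp (X + C α)).support := by
    rw [Polynomial.mem_support_iff, hcoeffN]
    exact fun hc => ha0 ((_root_.map_eq_zero (algebraMap K F)).mp hc)
  have hub := le_trans happ (wAG_le_coeff w α γ hmem)
  rw [hcoeffN] at hub
  -- 0 ≤ w(a) + N γ but w(a) < -(Nγ)
  obtain ⟨x, hx⟩ := WithTop.ne_top_iff_exists.mp (ne_top_of_lt hav)
  rw [← hx] at hav hub
  rw [← WithTop.coe_add, ← WithTop.coe_zero, WithTop.coe_le_coe] at hub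
  rw [WithTop.coe_lt_coe] at hav
  linarith

lemma choice_lemma (p : Polynomial K) (ε : ℝ) (hε : 0 < ε)
    (hpos : ∀ s ∈ S, 0 ≤ w (algebraMap K F (p.eval s)))
    (hne : ∃ s ∈ S, p.eval s ≠ 0) :
    ∃ s0 ∈ S, ∃ a : K, a ≠ 0 ∧ p.eval s0 ≠ 0 ∧
      0 ≤ w (algebraMap K F a) ∧ w (algebraMap K F a) ≤ (ε : WithTop ℝ) ∧
      ∀ t ∈ S, w (algebraMap K F (p.eval s0))
        ≤ w (algebraMap K F a) + w (algebraMap K F (p.eval t)) := by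
  classical
  set T : Set ℝ := {r : ℝ | ∃ s ∈ S, p.eval s ≠ 0 ∧ w (algebraMap K F (p.eval s)) = (r : WithTop ℝ)}
    with hT
  have hmemT : ∀ s ∈ S, p.eval s ≠ 0 → ∃ r : ℝ, r ∈ T ∧ w (algebraMap K F (p.eval s)) = (r : WithTop ℝ) := by
    intro s hs hps
    obtain ⟨r, hr⟩ := WithTop.ne_top_iff_exists.mp
      (w_ne_top w (show algebraMap K F (p.eval s) ≠ 0 from (_root_.map_ne_zero (algebraMap K F)).mpr hps))
    exact ⟨r, ⟨s, hs, hps, hr.symm⟩, hr.symm⟩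
  obtain ⟨s1, hs1, hps1⟩ := hne
  obtain ⟨r1', hr1'T, _⟩ := hmemT s1 hs1 hps1
  have hTne : T.Nonempty := ⟨r1', hr1'T⟩
  have hTbdd : BddBelow T := by
    refine ⟨0, fun r hr => ?_⟩
    obtain ⟨s, hs, hps, hval⟩ := hr
    have := hpos s hs
    rw [hval, ← WithTop.coe_zero, WithTop.coe_le_coe] at this
    exact this
  have hinf_le : ∀ t ∈ S, ((sInf T : ℝ) : WithTop ℝ) ≤ w (algebraMap K F (p.eval t)) := by
    intro t ht
    by_cases hpt : p.eval t = 0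
    · rw [hpt, map_zero, w.map_zero]; exact le_top
    · obtain ⟨r, hrT, hval⟩ := hmemT t ht hpt
      rw [hval, WithTop.coe_le_coe]
      exact csInf_le hTbdd hrT
  by_cases hattain : sInf T ∈ T
  · obtain ⟨s0, hs0, hps0, hval0⟩ := hattain
    refine ⟨s0, hs0, 1, one_ne_zero, hps0, ?_, ?_, ?_⟩
    · rw [map_one, w.map_one]
    · rw [map_one, w.map_one, ← WithTop.coe_zero, WithTop.coe_le_coe]; exact hε.le
    · intro t ht
      rw [map_one, w.map_one, zero_add, hval0]
      exact hinf_le t ht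
  · obtain ⟨r1, hr1T, hr1lt⟩ := Real.lt_sInf_add_pos hTne (half_pos hε)
    have hir1 : sInf T < r1 :=
      lt_of_le_of_ne (csInf_le hTbdd hr1T) (fun hh => hattain (hh ▸ hr1T))
    obtain ⟨r2, hr2T, hr2lt⟩ := Real.lt_sInf_add_pos hTne
      (show 0 < (r1 - sInf T)/2 by linarith)
    have hir2 : sInf T ≤ r2 := csInf_le hTbdd hr2T
    obtain ⟨sa, hsa, hpsa, hvala⟩ := hr1T
    obtain ⟨s0, hs0, hps0, hval0⟩ := hr2T
    refine ⟨s0, hs0, p.eval sa / p.eval s0, div_ne_zero hpsa hps0, hps0, ?_, ?_, ?_⟩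
    all_goals {
      have hva : w (algebraMap K F (p.eval sa / p.eval s0))
          = ((r1 - r2 : ℝ) : WithTop ℝ) := by
        apply wt_eq_of_add_coe
        rw [← hval0, ← w.map_mul, ← map_mul, div_mul_cancel₀ _ hps0, hvala]
      first
      | (rw [hva, ← WithTop.coe_zero, WithTop.coe_le_coe]; linarith)
      | (rw [hva, WithTop.coe_le_coe]; linarith)
      | (intro t ht
         rw [hva, hval0]
         refine le_trans ?_ (add_le_add (le_refl _) (hinf_le t ht))
         rw [← WithTop.coe_add, WithTop.coe_le_coe]
         linarith)
    }

lemma expand_lemma {F' : Type*} [Field F'] (p : ℕ → Polynomial F') (hm : ∀ k, (p k).Monic)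
    (hd : ∀ k, (p k).natDegree = k) :
    ∀ n : ℕ, ∀ g : Polynomial F', g.natDegree ≤ n →
      ∃ b : ℕ → F', g = ∑ k ∈ Finset.range (n+1), C (b k) * p k := by
  intro n
  induction n with
  | zero =>
      intro g hg
      refine ⟨fun _ => g.coeff 0, ?_⟩
      have hp0 : p 0 = 1 := Polynomial.Monic.natDegree_eq_zero (hm 0) |>.mp (hd 0)
      rw [Finset.sum_range_one, hp0, mul_one]
      exact g.eq_C_of_natDegree_le_zero hg
  | succ n ih =>
      intro g hg
      have hdeg : (g - C (g.coeff (n+1)) * p (n+1)).natDegree ≤ n := by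
        rw [natDegree_le_iff_coeff_eq_zero]
        intro m hm'
        rw [coeff_sub, coeff_C_mul]
        have hc1 : (p (n+1)).coeff (n+1) = 1 := by
          have := (hm (n+1)).coeff_natDegree
          rwa [hd (n+1)] at this
        rcases eq_or_lt_of_le (Nat.succ_le_of_lt hm') with heq | hlt
        · rw [← heq, hc1, mul_one, sub_self]
        · have e1 : g.coeff m = 0 := coeff_eq_zero_of_natDegree_lt (lt_of_le_of_lt hg hlt)
          have e2 : (p (n+1)).coeff m = 0 := by
            apply coeff_eq_zero_of_natDegree_lt
            rw [hd]; exact hlt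
          rw [e1, e2, mul_zero, sub_zero]
      obtain ⟨b', hb'⟩ := ih _ hdeg
      refine ⟨Function.update b' (n+1) (g.coeff (n+1)), ?_⟩
      have h1 : ∀ k ∈ Finset.range (n+1),
          C (Function.update b' (n+1) (g.coeff (n+1)) k) * p k = C (b' k) * p k :=
        fun k hk => by
          rw [Function.update_of_ne (Nat.ne_of_lt (Finset.mem_range.mp hk))]
      have h2 : ∑ k ∈ Finset.range (n+2), C (Function.update b' (n+1) (g.coeff (n+1)) k) * p k
          = (∑ k ∈ Finset.range (n+1), C (b' k) * p k) + C (g.coeff (n+1)) * p (n+1) := by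
        rw [Finset.sum_range_succ]
        congr 1
        · exact Finset.sum_congr rfl h1
        · rw [Function.update_self]
      rw [h2, ← hb']
      ring

end Main

theorem stmt13 {K F : Type*} [Field K] [Field F] [Algebra K F] [FiniteDimensional K F]
    (w : AddValuation F (WithTop ℝ))
    (hrank : ∃ π : F, 0 < w π ∧ w π ≠ ⊤)
    (α : F) (γ : ℝ) (hγ : ∃ x : F, x ≠ 0 ∧ w x = (γ : WithTop ℝ))
    (S : Set K) (hS : ∀ s ∈ S, 0 ≤ w (algebraMap K F s))
    (h : ∀ f : Polynomial K, (∀ s ∈ S, 0 ≤ w (algebraMap K F (f.eval s))) →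
      0 ≤ wAlphaGamma w α γ (f.map (algebraMap K F))) :
    ∀ g : Polynomial F, (∀ s ∈ S, 0 ≤ w (g.eval (algebraMap K F s))) →
      0 ≤ wAlphaGamma w α γ g := by
  classical
  intro g hg
  set n := g.natDegree with hn
  suffices H : ∀ ε : ℝ, 0 < ε →
      ((-(((n : ℝ) + 1) * ε) : ℝ) : WithTop ℝ) ≤ wAlphaGamma w α γ g by
    by_contra hcon
    rw [not_le] at hcon
    obtain ⟨r, hr⟩ := WithTop.ne_top_iff_exists.mp (ne_top_of_lt hcon)
    rw [← hr, ← WithTop.coe_zero, WithTop.coe_lt_coe] at hcon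
    have hn1 : (0:ℝ) < (n:ℝ) + 1 := by positivity
    have hε : 0 < -r / (2 * ((n:ℝ)+1)) := div_pos (by linarith) (by positivity)
    have hH := H _ hε
    rw [← hr, WithTop.coe_le_coe] at hH
    have hcalc : -(((n:ℝ)+1) * (-r / (2*((n:ℝ)+1)))) = r/2 := by
      field_simp
    linarith
  intro ε hε
  have hneg : ∀ r : ℝ, ∃ a : K, a ≠ 0 ∧ w (algebraMap K F a) < (r : WithTop ℝ) :=
    exists_lt_val w hrank
  -- construction of the nodes and scaling elements
  have hrec : ∀ m : ℕ, ∃ ss : ℕ → K, ∃ aa : ℕ → K,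
      ∀ k, k < m → (ss k ∈ S ∧ aa k ≠ 0 ∧
        (∏ j ∈ Finset.range k, (ss k - ss j)) ≠ 0 ∧
        0 ≤ w (algebraMap K F (aa k)) ∧ w (algebraMap K F (aa k)) ≤ (ε : WithTop ℝ) ∧
        ∀ t ∈ S, w (algebraMap K F (∏ j ∈ Finset.range k, (ss k - ss j))) ≤
          w (algebraMap K F (aa k)) + w (algebraMap K F (∏ j ∈ Finset.range k, (t - ss j)))) := by
    intro m
    induction m with
    | zero => exact ⟨fun _ => 1, fun _ => 1, fun k hk => absurd hk (Nat.not_lt_zero k)⟩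
    | succ m ih =>
        obtain ⟨ss, aa, hprop⟩ := ih
        have hpm : (∏ j ∈ Finset.range m, (X - C (ss j))).Monic :=
          monic_prod_of_monic _ _ (fun i _ => monic_X_sub_C _)
        have hpeval : ∀ t : K, (∏ j ∈ Finset.range m, (X - C (ss j))).eval t
            = ∏ j ∈ Finset.range m, (t - ss j) := by
          intro t; rw [Polynomial.eval_prod]; simp
        have hpos : ∀ s ∈ S,
            0 ≤ w (algebraMap K F ((∏ j ∈ Finset.range m, (X - C (ss j))).eval s)) := by
          intro s hs
          rw [hpeval, map_prod]
          apply w_prod_nonneg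
          intro j hj
          have h1 := hS s hs
          have h2 := hS _ (hprop j (Finset.mem_range.mp hj)).1
          rw [map_sub]
          exact le_trans (le_min h1 h2) (w_sub_ge w)
        have hne : ∃ s ∈ S, (∏ j ∈ Finset.range m, (X - C (ss j))).eval s ≠ 0 := by
          by_contra hcon
          push_neg at hcon
          exact vanish_absurd w α γ S h hneg _ hpm hcon
        obtain ⟨s0, hs0, a0, ha0, hps0, ha0w, hawε, hfinal⟩ :=
          choice_lemma w S (∏ j ∈ Finset.range m, (X - C (ss j))) ε hε hpos hne
        have hS0 : ∀ j, j < m → Function.update ss m s0 j = ss j :=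
          fun j hj => Function.update_of_ne (Nat.ne_of_lt hj) _ _
        have hA0 : ∀ j, j < m → Function.update aa m a0 j = aa j :=
          fun j hj => Function.update_of_ne (Nat.ne_of_lt hj) _ _
        have hSm : Function.update ss m s0 m = s0 := Function.update_self _ _ _
        have hAm : Function.update aa m a0 m = a0 := Function.update_self _ _ _
        refine ⟨Function.update ss m s0, Function.update aa m a0, ?_⟩
        intro k hk
        rcases Nat.lt_succ_iff_lt_or_eq.mp hk with hk' | hk'
        · have ek : ∀ t : K, ∏ j ∈ Finset.range k, (t - Function.update ss m s0 j)
              = ∏ j ∈ Finset.range k, (t - ss j) :=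
            fun t => Finset.prod_congr rfl
              (fun j hj => by rw [hS0 j (lt_trans (Finset.mem_range.mp hj) hk')])
          obtain ⟨q1, q2, q3, q4, q5, q6⟩ := hprop k hk'
          refine ⟨by rw [hS0 k hk']; exact q1, by rw [hA0 k hk']; exact q2, ?_, ?_, ?_, ?_⟩
          · rw [hS0 k hk', ek]; exact q3
          · rw [hA0 k hk']; exact q4
          · rw [hA0 k hk']; exact q5
          · intro t ht
            rw [hS0 k hk', ek, ek, hA0 k hk']
            exact q6 t ht
        · subst hk'
          have em : ∀ t : K, ∏ j ∈ Finset.range k, (t - Function.update ss k s0 j)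
              = (∏ j ∈ Finset.range k, (X - C (ss j))).eval t :=
            fun t => by
              rw [hpeval t]
              exact Finset.prod_congr rfl
                (fun j hj => by rw [hS0 j (Finset.mem_range.mp hj)])
          refine ⟨by rw [hSm]; exact hs0, by rw [hAm]; exact ha0, ?_, ?_, ?_, ?_⟩
          · rw [hSm, em]; exact hps0
          · rw [hAm]; exact ha0w
          · rw [hAm]; exact hawε
          · intro t ht
            rw [hSm, em, em t, hAm]
            exact hfinal t ht
  obtain ⟨ss, aa, hprop⟩ := hrec (n+1)
  -- auxiliary polynomials
  have hpKm : ∀ k : ℕ, (∏ j ∈ Finset.range k, (X - C (ss j)) : Polynomial K).Monic :=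
    fun k => monic_prod_of_monic _ _ (fun i _ => monic_X_sub_C _)
  have hpKd : ∀ k : ℕ, (∏ j ∈ Finset.range k, (X - C (ss j)) : Polynomial K).natDegree = k := by
    intro k
    rw [natDegree_prod_of_monic _ _ (fun i _ => monic_X_sub_C _)]
    simp
  have hpKeval : ∀ (k : ℕ) (t : K), (∏ j ∈ Finset.range k, (X - C (ss j)) : Polynomial K).eval t
      = ∏ j ∈ Finset.range k, (t - ss j) := by
    intro k t; rw [Polynomial.eval_prod]; simp
  have hpFm : ∀ k : ℕ,
      ((∏ j ∈ Finset.range k, (X - C (ss j)) : Polynomial K).map (algebraMap K F)).Monic :=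
    fun k => (hpKm k).map _
  have hpFd : ∀ k : ℕ,
      ((∏ j ∈ Finset.range k, (X - C (ss j)) : Polynomial K).map (algebraMap K F)).natDegree
        = k := fun k => by rw [(hpKm k).natDegree_map]; exact hpKd k
  obtain ⟨b, hb⟩ := expand_lemma _ hpFm hpFd n g (le_refl n)
  -- extract real values of the valuations of the products and scalars
  have hvals : ∀ k, ∃ tx : ℝ × ℝ, k < n+1 →
      (w (algebraMap K F (∏ j ∈ Finset.range k, (ss k - ss j))) = ((tx.1 : ℝ) : WithTop ℝ) ∧
       w (algebraMap K F (aa k)) = ((tx.2 : ℝ) : WithTop ℝ) ∧ 0 ≤ tx.2 ∧ tx.2 ≤ ε) := by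
    intro k
    by_cases hk : k < n+1
    · obtain ⟨_, q2, q3, q4, q5, _⟩ := hprop k hk
      obtain ⟨t, ht⟩ := WithTop.ne_top_iff_exists.mp
        (w_ne_top w ((_root_.map_ne_zero (algebraMap K F)).mpr q3))
      have hxne : w (algebraMap K F (aa k)) ≠ ⊤ :=
        ne_top_of_le_ne_top (WithTop.coe_ne_top) q5
      obtain ⟨x, hx⟩ := WithTop.ne_top_iff_exists.mp hxne
      refine ⟨(t, x), fun _ => ⟨ht.symm, hx.symm, ?_, ?_⟩⟩
      · rw [← hx, ← WithTop.coe_zero, WithTop.coe_le_coe] at q4; exact q4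
      · rw [← hx, WithTop.coe_le_coe] at q5; exact q5
    · exact ⟨(0,0), fun hc => absurd hc hk⟩
  choose tx htx using hvals
  -- evaluation identities
  have heval : ∀ i, i < n+1 → g.eval (algebraMap K F (ss i))
      = ∑ k ∈ Finset.range (n+1), b k * algebraMap K F
          ((∏ j ∈ Finset.range k, (X - C (ss j)) : Polynomial K).eval (ss i)) := by
    intro i _
    conv_lhs => rw [hb]
    rw [Polynomial.eval_finset_sum]
    refine Finset.sum_congr rfl (fun k _ => ?_)
    rw [eval_mul, eval_C, Polynomial.eval_map, Polynomial.eval₂_at_apply]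
  have hzero : ∀ k i : ℕ, i < k →
      (∏ j ∈ Finset.range k, (X - C (ss j)) : Polynomial K).eval (ss i) = 0 := by
    intro k i hik
    rw [hpKeval]
    exact Finset.prod_eq_zero (Finset.mem_range.mpr hik) (sub_self _)
  -- the triangular estimate
  have key : ∀ i, i < n+1 → ((-((i:ℝ) * ε) : ℝ) : WithTop ℝ)
      ≤ w (b i) + w (algebraMap K F (∏ j ∈ Finset.range i, (ss i - ss j))) := by
    intro i
    induction i using Nat.strong_induction_on with
    | _ i IH =>
      intro hi
      obtain ⟨hsiS, _, hci0, _, _, hfin_i⟩ := hprop i hi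
      have hsum := heval i hi
      have htrunc : ∑ k ∈ Finset.range (n+1), b k * algebraMap K F
            ((∏ j ∈ Finset.range k, (X - C (ss j)) : Polynomial K).eval (ss i))
          = ∑ k ∈ Finset.range (i+1), b k * algebraMap K F
            ((∏ j ∈ Finset.range k, (X - C (ss j)) : Polynomial K).eval (ss i)) := by
        symm
        apply Finset.sum_subset
        · intro k hk
          rw [Finset.mem_range] at *
          omega
        · intro k _ hk2
          rw [Finset.mem_range, not_lt] at hk2
          rw [hzero k i (by omega), map_zero, mul_zero]
      have heq : b i * algebraMap K F (∏ j ∈ Finset.range i, (ss i - ss j))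
          = g.eval (algebraMap K F (ss i))
            - ∑ k ∈ Finset.range i, b k * algebraMap K F
              ((∏ j ∈ Finset.range k, (X - C (ss j)) : Polynomial K).eval (ss i)) := by
        rw [hsum, htrunc, Finset.sum_range_succ, hpKeval]
        ring
      have hw : min (w (g.eval (algebraMap K F (ss i))))
          (w (∑ k ∈ Finset.range i, b k * algebraMap K F
            ((∏ j ∈ Finset.range k, (X - C (ss j)) : Polynomial K).eval (ss i))))
          ≤ w (b i) + w (algebraMap K F (∏ j ∈ Finset.range i, (ss i - ss j))) := by
        rw [← w.map_mul, heq]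
        exact w_sub_ge w
      refine le_trans (le_min ?_ ?_) hw
      · refine le_trans ?_ (hg _ hsiS)
        rw [← WithTop.coe_zero, WithTop.coe_le_coe]
        have : (0:ℝ) ≤ (i:ℝ) * ε := by positivity
        linarith
      · apply w_sum_ge
        intro k hk
        rw [Finset.mem_range] at hk
        have hkn : k < n+1 := by omega
        obtain ⟨_, _, hck0, _, _, hfin_k⟩ := hprop k hkn
        obtain ⟨htk, hxk, hx0, hxε⟩ := htx k hkn
        have h5 := hfin_k (ss i) hsiS
        rw [htk, hxk] at h5
        have h5' := (wt_coe_le_add_iff _ _ _).mp h5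
        have hIH := IH k hk hkn
        rw [htk] at hIH
        have hbk := (wt_le_add_coe_iff _ _ _).mp hIH
        rw [w.map_mul]
        refine le_trans ?_ (wt_add_le_add hbk (by rw [hpKeval]; exact h5'))
        rw [WithTop.coe_le_coe]
        have hki : (k:ℝ) + 1 ≤ (i:ℝ) := by exact_mod_cast hk
        nlinarith
  -- finish: bound every coefficient of the composed polynomial
  apply le_wAG
  intro i
  rw [wt_le_add_coe_iff]
  have hTg : g.comp (X + C α) = ∑ k ∈ Finset.range (n+1), C (b k) *
      (((∏ j ∈ Finset.range k, (X - C (ss j)) : Polynomial K).map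
        (algebraMap K F)).comp (X + C α)) := by
    conv_lhs => rw [hb]
    rw [show (∑ k ∈ Finset.range (n+1), C (b k) *
        ((∏ j ∈ Finset.range k, (X - C (ss j)) : Polynomial K).map
          (algebraMap K F))).comp (X + C α)
        = ∑ k ∈ Finset.range (n+1), (C (b k) *
          ((∏ j ∈ Finset.range k, (X - C (ss j)) : Polynomial K).map
            (algebraMap K F))).comp (X + C α) from by
      simp [Polynomial.eval₂_finset_sum, Polynomial.comp]]
    exact Finset.sum_congr rfl (fun k _ => by rw [Polynomial.mul_comp, C_comp])
  rw [hTg, finset_sum_coeff]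
  apply w_sum_ge
  intro k hkmem
  have hkn : k < n+1 := Finset.mem_range.mp hkmem
  rw [coeff_C_mul, w.map_mul]
  obtain ⟨hskS, hak0, hck0, _, _, hfin_k⟩ := hprop k hkn
  obtain ⟨htk, hxk, hx0, hxε⟩ := htx k hkn
  have hkinv : w (algebraMap K F (aa k * (∏ j ∈ Finset.range k, (ss k - ss j))⁻¹))
      = ((((tx k).2 - (tx k).1 : ℝ)) : WithTop ℝ) := by
    apply wt_eq_of_add_coe
    rw [← htk, ← w.map_mul, ← map_mul, inv_mul_cancel_right₀ hck0]
    exact hxk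
  have hint : ∀ s ∈ S, 0 ≤ w (algebraMap K F
      ((C (aa k * (∏ j ∈ Finset.range k, (ss k - ss j))⁻¹) *
        (∏ j ∈ Finset.range k, (X - C (ss j)) : Polynomial K)).eval s)) := by
    intro s hs
    rw [eval_mul, eval_C, map_mul, w.map_mul, hpKeval k s, hkinv]
    have h6 := hfin_k s hs
    rw [htk, hxk] at h6
    have h6' := (wt_coe_le_add_iff _ _ _).mp h6
    have hcomb := wt_add_le_add (le_refl ((((tx k).2 - (tx k).1 : ℝ)) : WithTop ℝ)) h6'
    have e0 : ((((tx k).2 - (tx k).1) + ((tx k).1 - (tx k).2) : ℝ) : WithTop ℝ) = 0 := by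
      norm_num
    exact le_trans (le_of_eq e0.symm) hcomb
  have happ := h _ hint
  have hco := wAG_coeff_le w α γ happ i
  have hcm : (((C (aa k * (∏ j ∈ Finset.range k, (ss k - ss j))⁻¹) *
      (∏ j ∈ Finset.range k, (X - C (ss j)) : Polynomial K)).map
        (algebraMap K F)).comp (X + C α))
      = C (algebraMap K F (aa k * (∏ j ∈ Finset.range k, (ss k - ss j))⁻¹)) *
        (((∏ j ∈ Finset.range k, (X - C (ss j)) : Polynomial K).map
          (algebraMap K F)).comp (X + C α)) := by
    rw [Polynomial.map_mul, map_C, Polynomial.mul_comp, C_comp]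
  rw [hcm, coeff_C_mul, w.map_mul, hkinv, ← WithTop.coe_zero] at hco
  have hQ := (wt_coe_le_add_iff _ _ _).mp ((wt_le_add_coe_iff _ _ _).mp hco)
  have hkey := key k hkn
  rw [htk] at hkey
  have hbk := (wt_le_add_coe_iff _ _ _).mp hkey
  refine le_trans ?_ (wt_add_le_add hbk hQ)
  rw [WithTop.coe_le_coe]
  have hkn' : (k:ℝ) ≤ (n:ℝ) := by exact_mod_cast Nat.lt_succ_iff.mp hkn
  nlinarith
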